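/- Let V ⊆ S_e be a k-subspace of dimension t ≥ 2 spanned by forms of degree e ≥ 2, and suppose h_1(V) = r. If h_{e−1}(V) ≥ r·t − t² + 2, then there exists a (t−1)-dimensional k-subspace W ⊆ V with h_1(W) = r (i.e., there exists a level quotient of type t−1 and the same socle degree having codimension r). -/

import Mathlib

open MvPolynomial

/-- One step of differentiation: the span of all first partial derivatives of elements of `W`. -/
noncomputable def derStep (k : Type*) [Field k] {σ : Type*}
    (W : Submodule k (MvPolynomial σ k)) : Submodule k (MvPolynomial σ k) :=
  Submodule.span k (⋃ i : σ, pderiv i '' (W : Set (MvPolynomial σ k)))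

/-- For `W ⊆ S_e` and `u ≤ e`, `hvec k e W u = h_u(W)` is the dimension of the space `D_u(W)`
spanned by the order `e - u` partial derivatives of the elements of `W`. -/
noncomputable def hvec (k : Type*) [Field k] {σ : Type*} (e : ℕ)
    (W : Submodule k (MvPolynomial σ k)) (u : ℕ) : ℕ :=
  Module.finrank k ((derStep k)^[e - u] W)

section Helpers

variable {k : Type*} [Field k] {σ : Type*}

lemma derStep_eq_iSup (W : Submodule k (MvPolynomial σ k)) :
    derStep k W = ⨆ i : σ, W.map (pderiv i (R := k)).toLinearMap := by
  unfold derStep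
  rw [Submodule.span_iUnion]
  congr 1
  ext i
  have hco : ⇑(pderiv i (R := k)) = ⇑(pderiv i (R := k)).toLinearMap := rfl
  rw [hco, ← Submodule.map_span, Submodule.span_eq]

lemma derStep_mono {W W' : Submodule k (MvPolynomial σ k)} (h : W ≤ W') :
    derStep k W ≤ derStep k W' := by
  rw [derStep_eq_iSup, derStep_eq_iSup]
  exact iSup_mono fun i => Submodule.map_mono h

lemma derStep_bot : derStep k (⊥ : Submodule k (MvPolynomial σ k)) = ⊥ := by
  rw [derStep_eq_iSup]; simp

lemma derStep_iterate_mono (n : ℕ) {W W' : Submodule k (MvPolynomial σ k)} (h : W ≤ W') :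
    (derStep k)^[n] W ≤ (derStep k)^[n] W' := by
  induction n generalizing W W' with
  | zero => exact h
  | succ n ih =>
    rw [Function.iterate_succ_apply, Function.iterate_succ_apply]
    exact ih (derStep_mono h)

lemma derStep_iterate_bot (n : ℕ) :
    (derStep k)^[n] (⊥ : Submodule k (MvPolynomial σ k)) = ⊥ := by
  induction n with
  | zero => rfl
  | succ n ih => rw [Function.iterate_succ_apply, derStep_bot, ih]

lemma degree_sub_single_add {m : σ →₀ ℕ} {i : σ} (h : m i ≠ 0) :
    (m - Finsupp.single i 1).degree + 1 = m.degree := by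
  have hle : Finsupp.single i 1 ≤ m := Finsupp.single_le_iff.mpr (Nat.one_le_iff_ne_zero.mpr h)
  have hadd : (m - Finsupp.single i 1) + Finsupp.single i 1 = m := tsub_add_cancel_of_le hle
  calc (m - Finsupp.single i 1).degree + 1
      = (m - Finsupp.single i 1).degree + (Finsupp.single i 1).degree := by
        congr 1
        simp [Finsupp.degree_eq_weight_one, Finsupp.weight_apply, Finsupp.sum_single_index]
    _ = m.degree := by
        rw [Finsupp.degree_eq_weight_one] at *
        rw [← map_add, hadd]

lemma degree_one_single {m : σ →₀ ℕ} (hm : m.degree = 1) : ∃ i, m = Finsupp.single i 1 := by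
  classical
  have h0 : m ≠ 0 := by
    intro h; rw [h, map_zero] at hm; exact one_ne_zero hm.symm
  obtain ⟨i, hi⟩ := Finsupp.ne_iff.mp h0
  simp only [Finsupp.coe_zero, Pi.zero_apply] at hi
  refine ⟨i, ?_⟩
  have hisupp : i ∈ m.support := Finsupp.mem_support_iff.mpr hi
  have hsum : ∑ j ∈ m.support, m j = 1 := hm
  have h2 : m i + ∑ j ∈ m.support.erase i, m j = ∑ j ∈ m.support, m j :=
    Finset.add_sum_erase m.support (fun j => m j) hisupp
  ext j
  rcases eq_or_ne j i with rfl | hne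
  · simp only [Finsupp.single_eq_same]
    omega
  · rw [Finsupp.single_eq_of_ne' (Ne.symm hne)]
    by_contra hj
    have hjsupp : j ∈ m.support.erase i :=
      Finset.mem_erase.mpr ⟨hne, Finsupp.mem_support_iff.mpr hj⟩
    have h3 : m j ≤ ∑ x ∈ m.support.erase i, m x :=
      Finset.single_le_sum (fun _ _ => Nat.zero_le _) hjsupp
    omega

lemma pderiv_isHomogeneous {f : MvPolynomial σ k} {n : ℕ} (hf : f.IsHomogeneous n) (i : σ) :
    (pderiv i f).IsHomogeneous (n - 1) := by
  classical
  rw [f.as_sum, map_sum]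
  apply MvPolynomial.IsHomogeneous.sum
  intro m hm
  rw [pderiv_monomial]
  rcases Nat.eq_zero_or_pos (m i) with h | h
  · simp only [h, Nat.cast_zero, mul_zero]
    rw [(monomial _).map_zero]
    exact isHomogeneous_zero _ _ _
  · apply isHomogeneous_monomial
    have hdm : m.degree = n := by
      by_contra hne
      exact (MvPolynomial.mem_support_iff.mp hm) (hf.coeff_eq_zero hne)
    have := degree_sub_single_add (m := m) (i := i) (Nat.pos_iff_ne_zero.mp h)
    omega

lemma pderiv_comm' (i j : σ) (f : MvPolynomial σ k) :
    pderiv i (pderiv j f) = pderiv j (pderiv i f) := by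
  classical
  rcases eq_or_ne i j with rfl | hij
  · rfl
  · rw [f.as_sum, map_sum, map_sum, map_sum, map_sum]
    apply Finset.sum_congr rfl
    intro m _
    rw [pderiv_monomial, pderiv_monomial, pderiv_monomial, pderiv_monomial]
    have h1 : (m - Finsupp.single j 1 : σ →₀ ℕ) i = m i := by
      rw [Finsupp.tsub_apply, Finsupp.single_eq_of_ne' hij.symm, Nat.sub_zero]
    have h2 : (m - Finsupp.single i 1 : σ →₀ ℕ) j = m j := by
      rw [Finsupp.tsub_apply, Finsupp.single_eq_of_ne' hij, Nat.sub_zero]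
    rw [h1, h2, tsub_right_comm, mul_right_comm]

lemma euler [Fintype σ] {f : MvPolynomial σ k} {n : ℕ} (hf : f.IsHomogeneous n) :
    ∑ i, X i * pderiv i f = (n : k) • f := by
  classical
  conv_lhs => rw [f.as_sum]
  simp only [map_sum, Finset.mul_sum]
  rw [Finset.sum_comm]
  conv_rhs => rw [f.as_sum, Finset.smul_sum]
  apply Finset.sum_congr rfl
  intro m hm
  have hdm : m.degree = n := by
    by_contra hne
    exact (MvPolynomial.mem_support_iff.mp hm) (hf.coeff_eq_zero hne)
  simp only [pderiv_monomial]
  have key : ∀ i : σ, X i * monomial (m - Finsupp.single i 1) (coeff m f * (m i : k))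
      = ((m i : ℕ) : k) • monomial m (coeff m f) := by
    intro i
    rcases Nat.eq_zero_or_pos (m i) with h | h
    · simp [h]
    · have hle : Finsupp.single i 1 ≤ m :=
        Finsupp.single_le_iff.mpr (Nat.one_le_iff_ne_zero.mpr (Nat.pos_iff_ne_zero.mp h))
      rw [X, monomial_mul, smul_monomial]
      rw [add_tsub_cancel_of_le hle, one_mul, mul_comm, smul_eq_mul]
  calc ∑ i, X i * monomial (m - Finsupp.single i 1) (coeff m f * (m i : k))
      = ∑ i, ((m i : ℕ) : k) • monomial m (coeff m f) := Finset.sum_congr rfl fun i _ => key i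
    _ = ((∑ i, m i : ℕ) : k) • monomial m (coeff m f) := by
        rw [← Finset.sum_smul, Nat.cast_sum]
    _ = (n : k) • monomial m (coeff m f) := by
        congr 2
        rw [← hdm]
        unfold Finsupp.degree
        exact (Finset.sum_subset (Finset.subset_univ _)
          (fun x _ hx => Finsupp.notMem_support_iff.mp hx)).symm

lemma homog_zero_eq_C {f : MvPolynomial σ k} (hf : f.IsHomogeneous 0) :
    f = C (coeff 0 f) := by
  classical
  ext m
  rcases eq_or_ne m 0 with rfl | h
  · simp
  · rw [hf.coeff_eq_zero (by simpa [Finsupp.degree_eq_zero_iff] using h)]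
    rw [coeff_C, if_neg (by exact fun hh => h hh.symm)]

lemma homog_one_pderiv {f : MvPolynomial σ k} (hf : f.IsHomogeneous 1) (i : σ) :
    pderiv i f = C (coeff (Finsupp.single i 1) f) := by
  classical
  have h0 : (pderiv i f).IsHomogeneous 0 := pderiv_isHomogeneous hf i
  rw [homog_zero_eq_C h0]
  congr 1
  conv_lhs => rw [f.as_sum, map_sum]
  rw [coeff_sum]
  have hterm : ∀ m ∈ f.support, coeff 0 (pderiv i (monomial m (coeff m f)))
      = if m = Finsupp.single i 1 then coeff m f else 0 := by
    intro m hm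
    have hdm : m.degree = 1 := by
      by_contra hne
      exact (MvPolynomial.mem_support_iff.mp hm) (hf.coeff_eq_zero hne)
    obtain ⟨j, rfl⟩ := degree_one_single hdm
    rw [pderiv_monomial]
    rcases eq_or_ne j i with rfl | hji
    · rw [if_pos rfl]
      simp
    · have hzero : (Finsupp.single j 1 : σ →₀ ℕ) i = 0 := Finsupp.single_eq_of_ne' hji
      rw [if_neg (by simpa using (Finsupp.single_left_inj one_ne_zero).not.mpr hji)]
      simp [hzero]
  rw [Finset.sum_congr rfl hterm, Finset.sum_ite_eq' f.support (Finsupp.single i 1)]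
  split_ifs with h
  · rfl
  · exact (MvPolynomial.notMem_support_iff.mp h).symm

lemma homog_one_eq_zero {f : MvPolynomial σ k} (hf : f.IsHomogeneous 1)
    (h : ∀ i, coeff (Finsupp.single i 1) f = 0) : f = 0 := by
  ext m
  rw [coeff_zero]
  by_contra hc
  have hdm : m.degree = 1 := by
    by_contra hne
    exact hc (hf.coeff_eq_zero hne)
  obtain ⟨i, rfl⟩ := degree_one_single hdm
  exact hc (h i)

/-- directional derivative, linear in the direction -/
noncomputable def pdL [Fintype σ] :
    (σ → k) →ₗ[k] MvPolynomial σ k →ₗ[k] MvPolynomial σ k where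
  toFun v := ∑ i, v i • (pderiv i (R := k)).toLinearMap
  map_add' v w := by simp [add_smul, Finset.sum_add_distrib]
  map_smul' c v := by simp [mul_smul, Finset.smul_sum]

lemma pdL_apply [Fintype σ] (v : σ → k) (f : MvPolynomial σ k) :
    pdL v f = ∑ i, v i • pderiv i f := by
  simp [pdL, LinearMap.sum_apply, LinearMap.smul_apply]

lemma pdL_single [Fintype σ] [DecidableEq σ] (j : σ) :
    (pdL (Pi.single j (1 : k)) : MvPolynomial σ k →ₗ[k] MvPolynomial σ k)
      = (pderiv j (R := k)).toLinearMap := by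
  apply LinearMap.ext
  intro f
  rw [pdL_apply]
  rw [Finset.sum_eq_single j]
  · simp
  · intro i _ hij
    rw [Pi.single_eq_of_ne hij, zero_smul]
  · intro h
    exact absurd (Finset.mem_univ j) h

lemma pdL_comm [Fintype σ] (v : σ → k) (i : σ) :
    (pderiv i (R := k)).toLinearMap ∘ₗ pdL v = pdL v ∘ₗ (pderiv i (R := k)).toLinearMap := by
  apply LinearMap.ext
  intro f
  simp only [LinearMap.comp_apply, Derivation.coeFn_coe, pdL_apply, map_sum]
  apply Finset.sum_congr rfl
  intro j _
  rw [Derivation.map_smul, pderiv_comm']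

lemma derStep_map_pdL [Fintype σ] (v : σ → k) (W : Submodule k (MvPolynomial σ k)) :
    derStep k (W.map (pdL v)) = (derStep k W).map (pdL v) := by
  rw [derStep_eq_iSup, derStep_eq_iSup, Submodule.map_iSup]
  apply iSup_congr
  intro i
  rw [← Submodule.map_comp, ← Submodule.map_comp, pdL_comm]

lemma derStep_iterate_map_pdL [Fintype σ] (n : ℕ) (v : σ → k) :
    ∀ W : Submodule k (MvPolynomial σ k),
    (derStep k)^[n] (W.map (pdL v)) = ((derStep k)^[n] W).map (pdL v) := by
  induction n with
  | zero => exact fun _ => rfl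
  | succ n ih =>
    intro W
    rw [Function.iterate_succ_apply, Function.iterate_succ_apply, derStep_map_pdL, ih]

lemma derStep_le_homog {d : ℕ} {W : Submodule k (MvPolynomial σ k)}
    (h : W ≤ homogeneousSubmodule σ k d) :
    derStep k W ≤ homogeneousSubmodule σ k (d - 1) := by
  rw [derStep_eq_iSup]
  apply iSup_le
  intro i
  rw [Submodule.map_le_iff_le_comap]
  intro f hf
  exact pderiv_isHomogeneous (h hf) i

lemma derStep_iterate_le_homog {d n : ℕ} {W : Submodule k (MvPolynomial σ k)}
    (h : W ≤ homogeneousSubmodule σ k d) :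
    (derStep k)^[n] W ≤ homogeneousSubmodule σ k (d - n) := by
  induction n with
  | zero => exact h
  | succ n ih =>
    rw [Function.iterate_succ_apply']
    have := derStep_le_homog ih
    rwa [Nat.sub_sub] at this

lemma eq_zero_of_iterate_kill [CharZero k] [Fintype σ] :
    ∀ (d : ℕ) (f : MvPolynomial σ k), f.IsHomogeneous d →
      (derStep k)^[d] (Submodule.span k {f}) = ⊥ → f = 0 := by
  intro d
  induction d with
  | zero =>
    intro f _ h
    exact Submodule.span_singleton_eq_bot.mp h
  | succ d ih =>
    intro f hf hkill
    have hpd : ∀ i, pderiv i f = 0 := by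
      intro i
      have h1 : Submodule.span k {pderiv i f} ≤ derStep k (Submodule.span k {f}) := by
        rw [Submodule.span_le, Set.singleton_subset_iff]
        apply Submodule.subset_span
        exact Set.mem_iUnion.mpr ⟨i, Set.mem_image_of_mem _ (Submodule.mem_span_singleton_self f)⟩
      have h2 := derStep_iterate_mono d h1
      rw [← Function.iterate_succ_apply, hkill] at h2
      have h3 : (pderiv i f).IsHomogeneous d := by
        simpa using pderiv_isHomogeneous hf i
      exact ih (pderiv i f) h3 (le_bot_iff.mp h2)
    have := euler hf
    rw [Finset.sum_congr rfl (fun i _ => by rw [hpd i, mul_zero])] at this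
    rw [Finset.sum_const_zero] at this
    have hcast : ((d + 1 : ℕ) : k) ≠ 0 := Nat.cast_ne_zero.mpr (Nat.succ_ne_zero d)
    rcases smul_eq_zero.mp this.symm with h | h
    · exact absurd h hcast
    · exact h

lemma kill_of_derStep_kill [CharZero k] [Fintype σ] {e : ℕ} (he : 1 ≤ e)
    {W : Submodule k (MvPolynomial σ k)} (hW : W ≤ homogeneousSubmodule σ k e)
    {v : σ → k} (hv : ∀ g ∈ (derStep k)^[e - 1] W, pdL v g = 0) :
    ∀ x ∈ W, pdL v x = 0 := by
  intro x hx
  have hfhom : (pdL v x).IsHomogeneous (e - 1) := by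
    rw [pdL_apply]
    apply MvPolynomial.IsHomogeneous.sum
    intro i _
    rw [smul_eq_C_mul]
    exact (pderiv_isHomogeneous (hW hx) i).C_mul _
  apply eq_zero_of_iterate_kill (e - 1) _ hfhom
  have h1 : Submodule.span k {pdL v x} ≤ W.map (pdL v) := by
    rw [Submodule.span_le, Set.singleton_subset_iff]
    exact Submodule.mem_map.mpr ⟨x, hx, rfl⟩
  have h2 := derStep_iterate_mono (e - 1) h1
  rw [derStep_iterate_map_pdL] at h2
  refine le_bot_iff.mp (h2.trans ?_)
  rintro y ⟨g, hg, rfl⟩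
  rw [hv g hg]
  exact Submodule.zero_mem ⊥

lemma pdL_homog_one [Fintype σ] {f : MvPolynomial σ k} (hf : f.IsHomogeneous 1) (v : σ → k) :
    pdL v f = C (∑ i, v i * coeff (Finsupp.single i 1) f) := by
  rw [pdL_apply, map_sum]
  apply Finset.sum_congr rfl
  intro i _
  rw [homog_one_pderiv hf i, smul_eq_C_mul, ← C_mul]

lemma finrank_sup_le' {M : Type*} [AddCommGroup M] [Module k M] (A B : Submodule k M)
    [FiniteDimensional k A] [FiniteDimensional k B] :
    Module.finrank k ↥(A ⊔ B) ≤ Module.finrank k A + Module.finrank k B := by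
  have := Submodule.finrank_sup_add_finrank_inf_eq A B
  omega

lemma finrank_iSup_le {M : Type*} [AddCommGroup M] [Module k M] :
    ∀ (n : ℕ) (Ws : Fin n → Submodule k M), (∀ i, FiniteDimensional k (Ws i)) →
    Module.finrank k ↥(⨆ i, Ws i) ≤ ∑ i, Module.finrank k (Ws i) := by
  intro n
  induction n with
  | zero =>
    intro Ws _
    rw [iSup_of_empty]
    simp
  | succ n ih =>
    intro Ws hfd
    have hsplit : (⨆ i, Ws i) = Ws 0 ⊔ ⨆ i : Fin n, Ws i.succ := by
      apply le_antisymm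
      · apply iSup_le
        intro i
        induction i using Fin.cases with
        | zero => exact le_sup_left
        | succ j => exact le_trans (le_iSup (fun i : Fin n => Ws i.succ) j) le_sup_right
      · apply sup_le (le_iSup Ws 0)
        apply iSup_le
        intro j
        exact le_iSup Ws j.succ
    rw [hsplit, Fin.sum_univ_succ]
    haveI : ∀ i : Fin n, FiniteDimensional k (Ws i.succ) := fun i => hfd _
    calc Module.finrank k ↥(Ws 0 ⊔ ⨆ i : Fin n, Ws i.succ)
        ≤ Module.finrank k (Ws 0) + Module.finrank k ↥(⨆ i : Fin n, Ws i.succ) :=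
          finrank_sup_le' _ _
      _ ≤ _ := by
          have h := ih (fun i => Ws i.succ) (fun i => hfd _)
          exact Nat.add_le_add_left h _

end Helpers

section MainArg

variable {k : Type*} [Field k] [CharZero k]

lemma D_homog_one {r e : ℕ} (he : 1 ≤ e) {V : Submodule k (MvPolynomial (Fin r) k)}
    (hV : V ≤ homogeneousSubmodule (Fin r) k e) :
    (derStep k)^[e - 1] V ≤ homogeneousSubmodule (Fin r) k 1 := by
  have h := derStep_iterate_le_homog (n := e - 1) hV
  rwa [show e - (e - 1) = 1 by omega] at h

/-- the coefficient-vector map on linear forms -/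
noncomputable def theta (k : Type*) [Field k] (r : ℕ) :
    MvPolynomial (Fin r) k →ₗ[k] (Fin r → k) :=
  LinearMap.pi fun i => lcoeff k (Finsupp.single i 1)

lemma theta_apply {r : ℕ} (f : MvPolynomial (Fin r) k) (i : Fin r) :
    theta k r f i = coeff (Finsupp.single i 1) f := rfl

lemma pdL_theta {r : ℕ} {f : MvPolynomial (Fin r) k} (hf : f.IsHomogeneous 1) (v : Fin r → k) :
    pdL v f = C (∑ i, v i * theta k r f i) :=
  pdL_homog_one hf v

lemma theta_surj {r e : ℕ} (hr : 1 ≤ r) (he : 1 ≤ e) {V : Submodule k (MvPolynomial (Fin r) k)}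
    (hV : V ≤ homogeneousSubmodule (Fin r) k e)
    (hcodim : Module.finrank k ((derStep k)^[e - 1] V) = r) {v : Fin r → k} (hv : v ≠ 0) :
    ∃ g ∈ (derStep k)^[e - 1] V, pdL v g ≠ 0 := by
  classical
  set D := (derStep k)^[e - 1] V with hD
  have hD1 : D ≤ homogeneousSubmodule (Fin r) k 1 := D_homog_one he hV
  haveI : FiniteDimensional k D := FiniteDimensional.of_finrank_pos (by omega)
  set ΘD : D →ₗ[k] (Fin r → k) := (theta k r).comp D.subtype with hΘD
  have hinj : Function.Injective ΘD := by
    rw [← LinearMap.ker_eq_bot]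
    rw [Submodule.eq_bot_iff]
    rintro ⟨g, hg⟩ hker
    have hval : ∀ i, coeff (Finsupp.single i 1) g = 0 := by
      intro i
      have := congrFun (show ΘD ⟨g, hg⟩ = 0 from hker) i
      simpa [hΘD, theta_apply] using this
    have : g = 0 := homog_one_eq_zero (hD1 hg) hval
    simp [this]
  have hrange : LinearMap.range ΘD = ⊤ := by
    apply Submodule.eq_top_of_finrank_eq
    rw [LinearMap.finrank_range_of_inj hinj]
    simp [hcodim, Module.finrank_pi]
  obtain ⟨j, hj⟩ : ∃ j, v j ≠ 0 := Function.ne_iff.mp hv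
  obtain ⟨g, hg⟩ : ∃ g : D, ΘD g = (Pi.single j 1 : Fin r → k) := by
    have hmem : (Pi.single j 1 : Fin r → k) ∈ LinearMap.range ΘD := hrange ▸ Submodule.mem_top
    exact LinearMap.mem_range.mp hmem
  refine ⟨(g : MvPolynomial (Fin r) k), g.2, ?_⟩
  have hhom : (g : MvPolynomial (Fin r) k).IsHomogeneous 1 := hD1 g.2
  rw [pdL_theta hhom]
  have hθ : ∀ i, theta k r (g : MvPolynomial (Fin r) k) i = (Pi.single j 1 : Fin r → k) i :=
    fun i => congrFun hg i
  have hsum : ∑ i, v i * theta k r (g : MvPolynomial (Fin r) k) i = v j := by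
    rw [Finset.sum_congr rfl (fun i _ => by rw [hθ i])]
    rw [Finset.sum_eq_single j]
    · simp
    · intro i _ hij
      rw [Pi.single_eq_of_ne hij, mul_zero]
    · intro h; exact absurd (Finset.mem_univ j) h
  rw [hsum]
  simpa using hj

lemma nondeg {r e : ℕ} (hr : 1 ≤ r) (he : 1 ≤ e) {V : Submodule k (MvPolynomial (Fin r) k)}
    (hV : V ≤ homogeneousSubmodule (Fin r) k e)
    (hcodim : Module.finrank k ((derStep k)^[e - 1] V) = r) {v : Fin r → k} (hv : v ≠ 0) :
    ∃ x ∈ V, pdL v x ≠ 0 := by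
  by_contra hcon
  push_neg at hcon
  have hmap : V.map (pdL v) = ⊥ := by
    rw [Submodule.eq_bot_iff]
    rintro y ⟨x, hx, rfl⟩
    exact hcon x hx
  have hDmap : ((derStep k)^[e - 1] V).map (pdL v) = ⊥ := by
    rw [← derStep_iterate_map_pdL, hmap, derStep_iterate_bot]
  obtain ⟨g, hg, hgne⟩ := theta_surj hr he hV hcodim hv
  apply hgne
  have : pdL v g ∈ ((derStep k)^[e - 1] V).map (pdL v) := Submodule.mem_map.mpr ⟨g, hg, rfl⟩
  rwa [hDmap, Submodule.mem_bot] at this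

set_option maxHeartbeats 1000000 in
lemma good_subspace_full {r e : ℕ} (hr : 1 ≤ r) (he : 1 ≤ e)
    {V W : Submodule k (MvPolynomial (Fin r) k)} (hWV : W ≤ V)
    (hV : V ≤ homogeneousSubmodule (Fin r) k e)
    (hcodim : Module.finrank k ((derStep k)^[e - 1] V) = r)
    (hgood : ∀ v : Fin r → k, v ≠ 0 → ∃ x ∈ W, pdL v x ≠ 0) :
    Module.finrank k ((derStep k)^[e - 1] W) = r := by
  classical
  set D := (derStep k)^[e - 1] V with hD
  set T := (derStep k)^[e - 1] W with hT
  have hTD : T ≤ D := derStep_iterate_mono _ hWV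
  have hD1 : D ≤ homogeneousSubmodule (Fin r) k 1 := D_homog_one he hV
  haveI : FiniteDimensional k D := FiniteDimensional.of_finrank_pos (by omega)
  haveI : FiniteDimensional k T := Submodule.finiteDimensional_of_le hTD
  have hUT : T.map (theta k r) = ⊤ := by
    by_contra hne
    obtain ⟨φ, hφ0, hφ⟩ :=
      Submodule.exists_dual_map_eq_bot_of_lt_top (lt_top_iff_ne_top.mpr hne) inferInstance
    set v : Fin r → k := fun i => φ (Pi.single i 1) with hvdef
    have hv0 : v ≠ 0 := by
      intro hzero
      apply hφ0
      apply (Pi.basisFun k (Fin r)).ext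
      intro i
      have : v i = 0 := congrFun hzero i
      rwa [Pi.basisFun_apply]
    have hkillT : ∀ g ∈ T, pdL v g = 0 := by
      intro g hg
      rw [pdL_theta (hD1 (hTD hg)) v]
      have hφθ : φ (theta k r g) = 0 := by
        have hmem : theta k r g ∈ T.map (theta k r) := Submodule.mem_map.mpr ⟨g, hg, rfl⟩
        have hmem2 : φ (theta k r g) ∈ (T.map (theta k r)).map φ :=
          Submodule.mem_map.mpr ⟨_, hmem, rfl⟩
        rw [hφ] at hmem2
        exact (Submodule.mem_bot k).mp hmem2
      have : ∑ i, v i * theta k r g i = φ (theta k r g) := by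
        conv_rhs => rw [show theta k r g = ∑ i, Pi.single i (theta k r g i) from
          (Finset.univ_sum_single (theta k r g)).symm]
        rw [map_sum]
        apply Finset.sum_congr rfl
        intro i _
        have hps : Pi.single i (theta k r g i) = theta k r g i • (Pi.single i 1 : Fin r → k) := by
          ext j
          rcases eq_or_ne j i with rfl | hji
          · simp
          · simp [Pi.single_eq_of_ne hji]
        rw [hps, map_smul, smul_eq_mul, mul_comm]
      rw [this, hφθ, map_zero]
    have hkillW : ∀ x ∈ W, pdL v x = 0 :=
      kill_of_derStep_kill he (le_trans hWV hV) hkillT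
    obtain ⟨x, hxW, hxne⟩ := hgood v hv0
    exact hxne (hkillW x hxW)
  have h1 : r ≤ Module.finrank k T := by
    have hle := Submodule.finrank_map_le (theta k r) T
    rw [hUT, finrank_top, Module.finrank_pi] at hle
    simpa using hle
  have h2 : Module.finrank k T ≤ r := by
    calc Module.finrank k T ≤ Module.finrank k D := Submodule.finrank_mono hTD
    _ = r := hcodim
  omega

end MainArg

set_option maxHeartbeats 1000000 in
/-- Corollary 2.10: if `h_1(V) = r` and `h_{e-1}(V) ≥ r·t - t² + 2`, then there is a level
quotient of type `t - 1` and the same socle degree having codimension `r`, i.e. a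
`(t - 1)`-dimensional subspace `W ⊆ V` with `h_1(W) = r`. -/
theorem corollary_2_10 {k : Type*} [Field k] [CharZero k] {r : ℕ} (hr : 1 ≤ r)
    {e t : ℕ} (he : 2 ≤ e) (ht : 2 ≤ t)
    (V : Submodule k (MvPolynomial (Fin r) k))
    (hVhom : ∀ f ∈ V, MvPolynomial.IsHomogeneous f e)
    (hVdim : Module.finrank k V = t)
    (hcodim : hvec k e V 1 = r)
    (hbound : (hvec k e V (e - 1) : ℤ) ≥ (r : ℤ) * t - t ^ 2 + 2) :
    ∃ W : Submodule k (MvPolynomial (Fin r) k), W ≤ V ∧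
      Module.finrank k W = t - 1 ∧ hvec k e W 1 = r := by
  classical
  haveI : FiniteDimensional k V := FiniteDimensional.of_finrank_pos (by omega)
  have hVS : V ≤ homogeneousSubmodule (Fin r) k e := fun f hf =>
    (mem_homogeneousSubmodule _ _).mpr (hVhom f hf)
  have hcodim' : Module.finrank k ((derStep k)^[e - 1] V) = r := hcodim
  have he1 : 1 ≤ e := by omega
  by_cases hall : ∀ β : V →ₗ[k] k, β ≠ 0 →
      ∃ v : Fin r → k, v ≠ 0 ∧ ∀ x : V, β x = 0 → pdL v (x : MvPolynomial (Fin r) k) = 0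
  · -- every hyperplane of V is "bad": contradiction with `hbound`
    exfalso
    have ext1 : ∀ β : V →ₗ[k] k, β ≠ 0 →
        ∃ (v : Fin r → k) (h : MvPolynomial (Fin r) k), v ≠ 0 ∧ h ≠ 0 ∧
          ∀ x : V, pdL v (x : MvPolynomial (Fin r) k) = β x • h := by
      intro β hβ
      obtain ⟨v, hv0, hkill⟩ := hall β hβ
      obtain ⟨x₀, hx₀⟩ : ∃ x₀ : V, β x₀ ≠ 0 := by
        by_contra hcon
        push_neg at hcon
        exact hβ (LinearMap.ext fun x => by rw [hcon x]; rfl)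
      have hfor : ∀ x : V, pdL v (x : MvPolynomial (Fin r) k)
          = β x • ((β x₀)⁻¹ • pdL v (x₀ : MvPolynomial (Fin r) k)) := by
        intro x
        set c : k := (β x₀)⁻¹ * β x with hc
        have hy : β (x - c • x₀) = 0 := by
          rw [map_sub, map_smul, smul_eq_mul, hc]
          field_simp
          simp
        have h0 := hkill _ hy
        have hcoe : ((x - c • x₀ : V) : MvPolynomial (Fin r) k)
            = (x : MvPolynomial (Fin r) k) - c • (x₀ : MvPolynomial (Fin r) k) := by
          simp
        rw [hcoe, map_sub, map_smul] at h0
        have hx' : pdL v (x : MvPolynomial (Fin r) k)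
            = c • pdL v (x₀ : MvPolynomial (Fin r) k) := by rwa [sub_eq_zero] at h0
        rw [hx', hc, smul_smul]
        ring_nf
      have hne : (β x₀)⁻¹ • pdL v (x₀ : MvPolynomial (Fin r) k) ≠ 0 := by
        intro hz
        obtain ⟨x, hxV, hx⟩ := nondeg hr he1 hVS hcodim' hv0
        apply hx
        have := hfor ⟨x, hxV⟩
        rw [hz, smul_zero] at this
        exact this
      exact ⟨v, _, hv0, hne, hfor⟩
    -- basis and dual functionals
    set b : Module.Basis (Fin t) k V := Module.finBasisOfFinrankEq k V hVdim with hb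
    have hcoordb : ∀ i j : Fin t, (b.coord i) (b j) = if i = j then (1:k) else 0 := by
      intro i j
      rw [Module.Basis.coord_apply, Module.Basis.repr_self, Finsupp.single_apply]
      by_cases h : i = j
      · rw [if_pos h, if_pos h.symm]
      · rw [if_neg h, if_neg (Ne.symm h)]
    have hδne : ∀ j : Fin t, (b.coord j : V →ₗ[k] k) ≠ 0 := by
      intro j hj
      have h1 : (b.coord j) (b j) = 0 := by rw [hj]; rfl
      rw [hcoordb j j, if_pos rfl] at h1
      exact one_ne_zero h1
    have ht0 : 0 < t := by omega
    have hβ₀sum : ∀ j : Fin t, (∑ i, b.coord i : V →ₗ[k] k) (b j) = 1 := by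
      intro j
      rw [LinearMap.sum_apply]
      rw [Finset.sum_congr rfl fun i _ => hcoordb i j]
      rw [Finset.sum_ite_eq' Finset.univ j fun _ => (1:k)]
      rw [if_pos (Finset.mem_univ j)]
    have hβ₀ne : (∑ i, b.coord i : V →ₗ[k] k) ≠ 0 := by
      intro hz
      have h1 := hβ₀sum ⟨0, ht0⟩
      rw [hz] at h1
      simp at h1
    obtain ⟨v0, h0, hv00, hh00, hfor0⟩ := ext1 _ hβ₀ne
    choose vf hf hvf0 hhf0 hforf using fun j : Fin t => ext1 _ (hδne j)
    -- evaluation of directional derivatives on basis elements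
    have hevalsum : ∀ (g : Fin t → k) (j : Fin t),
        pdL (∑ i, g i • vf i) ((b j : V) : MvPolynomial (Fin r) k) = g j • hf j := by
      intro g j
      rw [map_sum, LinearMap.sum_apply]
      have hterm : ∀ i : Fin t,
          (pdL (g i • vf i)) ((b j : V) : MvPolynomial (Fin r) k)
            = g i • ((if i = j then (1:k) else 0) • hf i) := by
        intro i
        rw [map_smul, LinearMap.smul_apply, hforf i (b j), hcoordb i j]
      rw [Finset.sum_congr rfl fun i _ => hterm i]
      rw [Finset.sum_congr rfl (fun i _ => by
        rw [smul_smul, mul_ite, mul_one, mul_zero, ite_smul, zero_smul])]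
      rw [Finset.sum_ite_eq' Finset.univ j fun i => g i • hf i]
      rw [if_pos (Finset.mem_univ j)]
    have hindep : LinearIndependent k vf := by
      rw [Fintype.linearIndependent_iff]
      intro g hg j
      have h1 := hevalsum g j
      rw [hg, map_zero, LinearMap.zero_apply] at h1
      rcases smul_eq_zero.mp h1.symm with h | h
      · exact h
      · exact absurd h (hhf0 j)
    -- two cases, producing a small space capturing all pdL z images
    have hcases : ∃ (Z : Submodule k (Fin r → k)) (Hs : Submodule k (MvPolynomial (Fin r) k)),
        FiniteDimensional k Hs ∧ (∀ z ∈ Z, ∀ x ∈ V, pdL z x ∈ Hs) ∧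
        (∀ y : ℕ, Module.finrank k Z + y = r →
          (Module.finrank k Hs : ℤ) + y * t ≤ (r : ℤ) * t - t ^ 2 + 1) := by
      by_cases hmem : v0 ∈ Submodule.span k (Set.range vf)
      · -- v0 is a combination of the vf: all hf i lie on the line spanned by h0
        obtain ⟨c, hc⟩ := (Submodule.mem_span_range_iff_exists_fun k).mp hmem
        have hkey : ∀ j, h0 = c j • hf j := by
          intro j
          have h1 : pdL v0 ((b j : V) : MvPolynomial (Fin r) k) = h0 := by
            rw [hfor0 (b j), hβ₀sum j, one_smul]
          rw [← hc, hevalsum c j] at h1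
          exact h1.symm
        have hcne : ∀ j, c j ≠ 0 := fun j hcj => hh00 (by rw [hkey j, hcj, zero_smul])
        have hfmem : ∀ i, hf i ∈ Submodule.span k {h0} := by
          intro i
          rw [Submodule.mem_span_singleton]
          exact ⟨(c i)⁻¹, by rw [hkey i, smul_smul, inv_mul_cancel₀ (hcne i), one_smul]⟩
        refine ⟨Submodule.span k (Set.range vf), Submodule.span k {h0},
          FiniteDimensional.span_of_finite k (Set.finite_singleton h0), ?_, ?_⟩
        · intro z hz x hx
          obtain ⟨d, hd⟩ := (Submodule.mem_span_range_iff_exists_fun k).mp hz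
          have : pdL z x = ∑ i, d i • ((b.coord i ⟨x, hx⟩) • hf i) := by
            rw [← hd, map_sum, LinearMap.sum_apply]
            apply Finset.sum_congr rfl
            intro i _
            rw [map_smul, LinearMap.smul_apply, hforf i ⟨x, hx⟩]
          rw [this]
          apply Submodule.sum_mem
          intro i _
          exact Submodule.smul_mem _ _ (Submodule.smul_mem _ _ (hfmem i))
        · intro y hy
          have hZr : Module.finrank k (Submodule.span k (Set.range vf)) = t := by
            rw [finrank_span_eq_card hindep, Fintype.card_fin]
          have hHr : Module.finrank k (Submodule.span k ({h0} : Set (MvPolynomial (Fin r) k)))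
              = 1 := finrank_span_singleton hh00
          rw [hZr] at hy
          have hyr : (r : ℤ) = t + y := by exact_mod_cast hy.symm
          rw [hHr, hyr]
          ring_nf
          omega
      · -- v0 independent from the vf
        set w : Fin (t + 1) → (Fin r → k) := Fin.cons v0 vf with hw
        have hwindep : LinearIndependent k w := hindep.fin_cons hmem
        set hfam : Fin (t + 1) → MvPolynomial (Fin r) k := Fin.cons h0 hf with hhfam
        have hwmem : ∀ (i : Fin (t + 1)) (x : MvPolynomial (Fin r) k) (hx : x ∈ V),
            pdL (w i) x ∈ Submodule.span k (Set.range hfam) := by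
          intro i x hx
          induction i using Fin.cases with
          | zero =>
            rw [show w 0 = v0 from rfl, hfor0 ⟨x, hx⟩]
            exact Submodule.smul_mem _ _
              (Submodule.subset_span ⟨0, show hfam 0 = h0 from rfl⟩)
          | succ j =>
            rw [show w j.succ = vf j from rfl, hforf j ⟨x, hx⟩]
            exact Submodule.smul_mem _ _
              (Submodule.subset_span ⟨j.succ, show hfam j.succ = hf j from rfl⟩)
        refine ⟨Submodule.span k (Set.range w), Submodule.span k (Set.range hfam),
          FiniteDimensional.span_of_finite k (Set.finite_range hfam), ?_, ?_⟩
        · intro z hz x hx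
          obtain ⟨d, hd⟩ := (Submodule.mem_span_range_iff_exists_fun k).mp hz
          have : pdL z x = ∑ i, d i • pdL (w i) x := by
            rw [← hd, map_sum, LinearMap.sum_apply]
            apply Finset.sum_congr rfl
            intro i _
            rw [map_smul, LinearMap.smul_apply]
          rw [this]
          apply Submodule.sum_mem
          intro i _
          exact Submodule.smul_mem _ _ (hwmem i x hx)
        · intro y hy
          have hZr : Module.finrank k (Submodule.span k (Set.range w)) = t + 1 := by
            rw [finrank_span_eq_card hwindep, Fintype.card_fin]
          have hHr : Module.finrank k (Submodule.span k (Set.range hfam)) ≤ t + 1 := by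
            refine le_trans (finrank_span_le_card (Set.range hfam)) ?_
            rw [Set.toFinset_card]
            exact le_trans (Fintype.card_range_le hfam) (by rw [Fintype.card_fin])
          rw [hZr] at hy
          have hyr : (r : ℤ) = (t + 1) + y := by exact_mod_cast hy.symm
          have hHr' : (Module.finrank k (Submodule.span k (Set.range hfam)) : ℤ) ≤ t + 1 := by
            exact_mod_cast hHr
          rw [hyr]
          ring_nf
          ring_nf at hHr'
          linarith
    obtain ⟨Z, Hs, hfdHs, hZH, harith⟩ := hcases
    haveI : FiniteDimensional k Hs := hfdHs
    -- complement of Z in (Fin r → k)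
    obtain ⟨Y, hY⟩ := Z.exists_isCompl
    set m := Module.finrank k Y with hm
    have hms : Module.finrank k Z + m = r := by
      have h1 := Submodule.finrank_add_eq_of_isCompl hY
      rwa [Module.finrank_pi, Fintype.card_fin] at h1
    set bY : Module.Basis (Fin m) k Y := Module.finBasis k Y with hbY
    set U : Submodule k (MvPolynomial (Fin r) k) :=
      ⨆ i : Fin m, V.map (pdL ((bY i : Fin r → k))) with hU
    have hUmem : ∀ y ∈ Y, ∀ x ∈ V, pdL y x ∈ U := by
      intro y hy x hx
      have hrepr := bY.sum_repr ⟨y, hy⟩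
      have hcoe : y = ∑ i, (bY.repr ⟨y, hy⟩ i) • (bY i : Fin r → k) := by
        have h2 := congrArg (Submodule.subtype Y) hrepr
        simp only [map_sum, map_smul, Submodule.coe_subtype] at h2
        exact h2.symm
      rw [hcoe, map_sum, LinearMap.sum_apply]
      apply Submodule.sum_mem
      intro i _
      rw [map_smul, LinearMap.smul_apply]
      apply Submodule.smul_mem
      exact le_iSup (fun i : Fin m => V.map (pdL ((bY i : Fin r → k)))) i
        (Submodule.mem_map.mpr ⟨x, hx, rfl⟩)
    have hsub : derStep k V ≤ Hs ⊔ U := by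
      rw [derStep_eq_iSup]
      apply iSup_le
      intro i
      rintro y ⟨x, hx, rfl⟩
      have hps : (pderiv i (R := k)).toLinearMap x = pdL (Pi.single i 1 : Fin r → k) x := by
        rw [pdL_single]
      rw [hps]
      have hmemtop : (Pi.single i 1 : Fin r → k) ∈ Z ⊔ Y := by
        rw [hY.sup_eq_top]; trivial
      obtain ⟨z, hz, yy, hyy, heq⟩ := Submodule.mem_sup.mp hmemtop
      rw [← heq, map_add, LinearMap.add_apply]
      exact Submodule.add_mem _ (Submodule.mem_sup_left (hZH z hz x hx))
        (Submodule.mem_sup_right (hUmem yy hyy x hx))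
    haveI : ∀ i : Fin m, FiniteDimensional k (V.map (pdL ((bY i : Fin r → k)))) :=
      fun i => inferInstance
    have hUrank : Module.finrank k U ≤ m * t := by
      calc Module.finrank k U
          ≤ ∑ i : Fin m, Module.finrank k (V.map (pdL ((bY i : Fin r → k)))) :=
            finrank_iSup_le m _ (fun i => inferInstance)
        _ ≤ ∑ _i : Fin m, t := Finset.sum_le_sum fun i _ => by
            rw [← hVdim]; exact Submodule.finrank_map_le _ _
        _ = m * t := by rw [Finset.sum_const, Finset.card_univ, Fintype.card_fin, smul_eq_mul]
    haveI : FiniteDimensional k U := by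
      rw [hU]; infer_instance
    have hDrank : Module.finrank k (derStep k V) ≤ Module.finrank k Hs + m * t := by
      calc Module.finrank k (derStep k V)
          ≤ Module.finrank k (Hs ⊔ U : Submodule k (MvPolynomial (Fin r) k)) :=
            Submodule.finrank_mono hsub
        _ ≤ Module.finrank k Hs + Module.finrank k U := finrank_sup_le' _ _
        _ ≤ Module.finrank k Hs + m * t := by omega
    have hbv : hvec k e V (e - 1) = Module.finrank k (derStep k V) := by
      unfold hvec
      rw [show e - (e - 1) = 1 by omega, Function.iterate_one]
    rw [hbv] at hbound
    have hfinal := harith m hms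
    have hcast : (Module.finrank k (derStep k V) : ℤ)
        ≤ (Module.finrank k Hs : ℤ) + (m : ℤ) * t := by exact_mod_cast hDrank
    linarith
  · -- some hyperplane is "good": it gives the desired subspace
    push_neg at hall
    obtain ⟨β, hβ0, hgoodβ⟩ := hall
    set W : Submodule k (MvPolynomial (Fin r) k) := (LinearMap.ker β).map V.subtype with hW
    have hWV : W ≤ V := Submodule.map_subtype_le V (LinearMap.ker β)
    have hker : Module.finrank k (LinearMap.ker β) + 1 = t := by
      have hrn := LinearMap.finrank_range_add_finrank_ker β
      have hsurj : LinearMap.range β = ⊤ := by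
        obtain ⟨x₀, hx₀⟩ : ∃ x₀ : V, β x₀ ≠ 0 := by
          by_contra hcon
          push_neg at hcon
          exact hβ0 (LinearMap.ext fun x => by rw [hcon x]; rfl)
        rw [eq_top_iff]
        intro c _
        refine LinearMap.mem_range.mpr ⟨(c * (β x₀)⁻¹) • x₀, ?_⟩
        rw [map_smul, smul_eq_mul]
        field_simp
      rw [hsurj, finrank_top, Module.finrank_self, hVdim] at hrn
      omega
    have hWrank : Module.finrank k W = t - 1 := by
      rw [hW, Submodule.finrank_map_subtype_eq]
      omega
    have hgood : ∀ v : Fin r → k, v ≠ 0 → ∃ x ∈ W, pdL v x ≠ 0 := by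
      intro v hv
      obtain ⟨x, hx0, hxne⟩ := hgoodβ v hv
      exact ⟨(x : MvPolynomial (Fin r) k),
        Submodule.mem_map.mpr ⟨x, LinearMap.mem_ker.mpr hx0, rfl⟩, hxne⟩
    exact ⟨W, hWV, hWrank, good_subspace_full hr he1 hWV hVS hcodim' hgood⟩
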